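/- Let ξ ∈ ℝ and c > 0. Let μ: ℝ → ℝ be Lipschitz on (−∞, ξ) and Lipschitz on (ξ, ∞), so that the one-sided limits μ(ξ+) := lim_{x→ξ+} μ(x) and μ(ξ−) := lim_{x→ξ−} μ(x) exist, and let σ: ℝ → ℝ be continuous with σ(ξ) ≠ 0. Set α := (μ(ξ−) − μ(ξ+)) / (2σ(ξ)²) and let φ̄(x) = (x−ξ)|x−ξ| φ((x−ξ)/c). Then the function h(x) := μ(x)(1 + α φ̄'(x)) + (1/2) α φ̄''(x) σ(x)², defined for x ≠ ξ, has equal one-sided limits at ξ; more precisely, lim_{x→ξ+} h(x) = lim_{x→ξ−} h(x) = (μ(ξ+) + μ(ξ−))/2. -/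

import Mathlib

open Filter

/-- The bump function `φ(u) = (1+u)³(1-u)³` for `|u| ≤ 1` and `φ(u) = 0` otherwise. -/
noncomputable def phi (u : ℝ) : ℝ := if |u| ≤ 1 then (1 + u) ^ 3 * (1 - u) ^ 3 else 0

/-- `φ̄(x) = (x-ξ)|x-ξ| φ((x-ξ)/c)`. -/
noncomputable def phibar (ξ c : ℝ) (x : ℝ) : ℝ := (x - ξ) * |x - ξ| * phi ((x - ξ) / c)

/-- derivative transfer on an open set -/
lemma deriv_eq_on_open (f g : ℝ → ℝ) (s : Set ℝ) (hs : IsOpen s)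
    (hfg : ∀ x ∈ s, f x = g x) : ∀ x ∈ s, deriv f x = deriv g x := fun x hx =>
  Filter.EventuallyEq.deriv_eq ((hs.eventually_mem hx).mono hfg)

noncomputable def gP (ξ c : ℝ) (x : ℝ) : ℝ :=
  (x - ξ)^2 - (3/c^2)*(x - ξ)^4 + (3/c^4)*(x - ξ)^6 - (1/c^6)*(x - ξ)^8

noncomputable def gP' (ξ c : ℝ) (x : ℝ) : ℝ :=
  2*(x - ξ) - (12/c^2)*(x - ξ)^3 + (18/c^4)*(x - ξ)^5 - (8/c^6)*(x - ξ)^7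

noncomputable def gP'' (ξ c : ℝ) (x : ℝ) : ℝ :=
  2 - (36/c^2)*(x - ξ)^2 + (90/c^4)*(x - ξ)^4 - (56/c^6)*(x - ξ)^6

lemma hasDerivAt_gP (ξ c x : ℝ) : HasDerivAt (gP ξ c) (gP' ξ c x) x := by
  have h1 : HasDerivAt (fun x : ℝ => x - ξ) 1 x := (hasDerivAt_id x).sub_const ξ
  have := (((h1.pow 2).sub ((h1.pow 4).const_mul (3/c^2))).add
    ((h1.pow 6).const_mul (3/c^4))).sub ((h1.pow 8).const_mul (1/c^6))
  exact (this.congr_deriv (by simp [gP']; ring)).congr_of_eventuallyEq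
    (Filter.Eventually.of_forall fun y => by simp [gP])

lemma hasDerivAt_gP' (ξ c x : ℝ) : HasDerivAt (gP' ξ c) (gP'' ξ c x) x := by
  have h1 : HasDerivAt (fun x : ℝ => x - ξ) 1 x := (hasDerivAt_id x).sub_const ξ
  have := (((h1.const_mul 2).sub ((h1.pow 3).const_mul (12/c^2))).add
    ((h1.pow 5).const_mul (18/c^4))).sub ((h1.pow 7).const_mul (8/c^6))
  exact (this.congr_deriv (by simp [gP'']; ring)).congr_of_eventuallyEq
    (Filter.Eventually.of_forall fun y => by simp [gP'])

lemma phibar_eq_right (ξ c : ℝ) (hc : 0 < c) :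
    ∀ x ∈ Set.Ioo ξ (ξ + c), phibar ξ c x = gP ξ c x := by
  intro x hx
  have ht0 : 0 < x - ξ := by linarith [hx.1]
  have htc : x - ξ < c := by linarith [hx.2]
  have habs : |x - ξ| = x - ξ := abs_of_pos ht0
  have hu : |(x - ξ)/c| ≤ 1 := by
    rw [abs_div, abs_of_pos hc, div_le_one hc, habs]; linarith
  simp only [phibar, phi, if_pos hu, habs, gP]
  field_simp
  ring

lemma phibar_eq_left (ξ c : ℝ) (hc : 0 < c) :
    ∀ x ∈ Set.Ioo (ξ - c) ξ, phibar ξ c x = -gP ξ c x := by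
  intro x hx
  have ht0 : x - ξ < 0 := by linarith [hx.2]
  have htc : -c < x - ξ := by linarith [hx.1]
  have habs : |x - ξ| = -(x - ξ) := abs_of_neg ht0
  have hu : |(x - ξ)/c| ≤ 1 := by
    rw [abs_div, abs_of_pos hc, div_le_one hc, habs]; linarith
  simp only [phibar, phi, if_pos hu, habs, gP]
  field_simp
  ring

/-- with `α = (μ(ξ-) - μ(ξ+))/(2σ(ξ)²)`, the function
`h(x) = μ(x)(1 + α φ̄'(x)) + (1/2) α φ̄''(x) σ(x)²` has equal one-sided limits
at `ξ`, both equal to `(μ(ξ+) + μ(ξ-))/2`. -/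
theorem transformed_drift_one_sided_limits
    (ξ c : ℝ) (hc : 0 < c) (μ σ : ℝ → ℝ)
    (L : ℝ)
    (hμleft : ∀ x ∈ Set.Iio ξ, ∀ y ∈ Set.Iio ξ, |μ x - μ y| ≤ L * |x - y|)
    (hμright : ∀ x ∈ Set.Ioi ξ, ∀ y ∈ Set.Ioi ξ, |μ x - μ y| ≤ L * |x - y|)
    (μplus μminus : ℝ)
    (hplus : Tendsto μ (nhdsWithin ξ (Set.Ioi ξ)) (nhds μplus))
    (hminus : Tendsto μ (nhdsWithin ξ (Set.Iio ξ)) (nhds μminus))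
    (hσ : Continuous σ) (hσξ : σ ξ ≠ 0)
    (α : ℝ) (hα : α = (μminus - μplus) / (2 * (σ ξ) ^ 2))
    (h : ℝ → ℝ)
    (hh : ∀ x : ℝ, x ≠ ξ →
      h x = μ x * (1 + α * deriv (phibar ξ c) x)
        + (1 / 2) * α * deriv (deriv (phibar ξ c)) x * (σ x) ^ 2) :
    Tendsto h (nhdsWithin ξ (Set.Ioi ξ)) (nhds ((μplus + μminus) / 2)) ∧
    Tendsto h (nhdsWithin ξ (Set.Iio ξ)) (nhds ((μplus + μminus) / 2)) := by
  have hσξ2 : (σ ξ)^2 ≠ 0 := pow_ne_zero 2 hσξ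
  -- continuity and values of gP', gP''
  have hcont' : Continuous (gP' ξ c) := by unfold gP'; fun_prop
  have hcont'' : Continuous (gP'' ξ c) := by unfold gP''; fun_prop
  have hval' : gP' ξ c ξ = 0 := by simp [gP']
  have hval'' : gP'' ξ c ξ = 2 := by simp [gP'']
  have hderiv_gP : deriv (gP ξ c) = gP' ξ c := funext fun x => (hasDerivAt_gP ξ c x).deriv
  have hderiv_gP' : deriv (gP' ξ c) = gP'' ξ c := funext fun x => (hasDerivAt_gP' ξ c x).deriv
  constructor
  · -- right limit
    have hsO : IsOpen (Set.Ioo ξ (ξ + c)) := isOpen_Ioo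
    have hd1 : ∀ x ∈ Set.Ioo ξ (ξ + c), deriv (phibar ξ c) x = gP' ξ c x := by
      intro x hx
      rw [deriv_eq_on_open _ _ _ hsO (phibar_eq_right ξ c hc) x hx, hderiv_gP]
    have hd2 : ∀ x ∈ Set.Ioo ξ (ξ + c), deriv (deriv (phibar ξ c)) x = gP'' ξ c x := by
      intro x hx
      rw [deriv_eq_on_open _ _ _ hsO hd1 x hx, hderiv_gP']
    have hmem : Set.Ioo ξ (ξ + c) ∈ nhdsWithin ξ (Set.Ioi ξ) :=
      Ioo_mem_nhdsGT (by linarith)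
    have hEq : h =ᶠ[nhdsWithin ξ (Set.Ioi ξ)]
        fun x => μ x * (1 + α * gP' ξ c x) + (1/2) * α * gP'' ξ c x * (σ x)^2 := by
      filter_upwards [hmem] with x hx
      rw [hh x (ne_of_gt hx.1), hd1 x hx, hd2 x hx]
    rw [Filter.tendsto_congr' hEq]
    have h1 : Tendsto (gP' ξ c) (nhdsWithin ξ (Set.Ioi ξ)) (nhds 0) := by
      rw [← hval']; exact (hcont'.tendsto ξ).mono_left nhdsWithin_le_nhds
    have h2 : Tendsto (gP'' ξ c) (nhdsWithin ξ (Set.Ioi ξ)) (nhds 2) := by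
      rw [← hval'']; exact (hcont''.tendsto ξ).mono_left nhdsWithin_le_nhds
    have h3 : Tendsto σ (nhdsWithin ξ (Set.Ioi ξ)) (nhds (σ ξ)) :=
      (hσ.tendsto ξ).mono_left nhdsWithin_le_nhds
    have := (hplus.mul (((h1.const_mul α).const_add 1))).add
      (((h2.const_mul ((1:ℝ)/2 * α)).mul ((h3.pow 2))))
    convert (hplus.mul ((h1.const_mul α).const_add 1)).add
      (((tendsto_const_nhds.mul h2).mul (h3.pow 2)) :
        Tendsto (fun x => ((1:ℝ)/2 * α) * gP'' ξ c x * (σ x)^2) _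
          (nhds ((1/2 * α) * 2 * (σ ξ)^2))) using 2
    rw [hα]; field_simp; ring
  · -- left limit
    have hsO : IsOpen (Set.Ioo (ξ - c) ξ) := isOpen_Ioo
    have hd1 : ∀ x ∈ Set.Ioo (ξ - c) ξ, deriv (phibar ξ c) x = -gP' ξ c x := by
      intro x hx
      rw [deriv_eq_on_open _ _ _ hsO (phibar_eq_left ξ c hc) x hx,
        show (fun y => -gP ξ c y) = -gP ξ c from rfl, deriv.neg, hderiv_gP]
    have hd2 : ∀ x ∈ Set.Ioo (ξ - c) ξ, deriv (deriv (phibar ξ c)) x = -gP'' ξ c x := by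
      intro x hx
      rw [deriv_eq_on_open _ _ _ hsO hd1 x hx,
        show (fun y => -gP' ξ c y) = -gP' ξ c from rfl, deriv.neg, hderiv_gP']
    have hmem : Set.Ioo (ξ - c) ξ ∈ nhdsWithin ξ (Set.Iio ξ) :=
      Ioo_mem_nhdsLT (by linarith)
    have hEq : h =ᶠ[nhdsWithin ξ (Set.Iio ξ)]
        fun x => μ x * (1 + α * (-gP' ξ c x)) + (1/2) * α * (-gP'' ξ c x) * (σ x)^2 := by
      filter_upwards [hmem] with x hx
      rw [hh x (ne_of_lt hx.2), hd1 x hx, hd2 x hx]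
    rw [Filter.tendsto_congr' hEq]
    have h1 : Tendsto (gP' ξ c) (nhdsWithin ξ (Set.Iio ξ)) (nhds 0) := by
      rw [← hval']; exact (hcont'.tendsto ξ).mono_left nhdsWithin_le_nhds
    have h2 : Tendsto (gP'' ξ c) (nhdsWithin ξ (Set.Iio ξ)) (nhds 2) := by
      rw [← hval'']; exact (hcont''.tendsto ξ).mono_left nhdsWithin_le_nhds
    have h3 : Tendsto σ (nhdsWithin ξ (Set.Iio ξ)) (nhds (σ ξ)) :=
      (hσ.tendsto ξ).mono_left nhdsWithin_le_nhds
    convert (hminus.mul ((h1.neg.const_mul α).const_add 1)).add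
      (((tendsto_const_nhds.mul h2.neg).mul (h3.pow 2)) :
        Tendsto (fun x => ((1:ℝ)/2 * α) * (-gP'' ξ c x) * (σ x)^2) _
          (nhds ((1/2 * α) * (-2) * (σ ξ)^2))) using 2
    rw [hα]; field_simp; ring
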